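/- Let m > 0, k ∈ ℤ with k ≠ 0, and λ ≤ 0. Suppose γ is a differentiable real function on an interval [m/2, b) with γ(m/2) = 1/m satisfying γ'(r) + γ(r)² = −1/(4r²) + k²/r² − (m/r³)·(1 + m/(2r))^{-2} − λ·(1 + m/(2r))⁴. Then γ(r) ≥ ψ(r) for all r in [m/2, b), where ψ(r) = (1/(2r))·(1 − √(4k² − 2)·(2/(1 + (2r/m)^{√(4k²−2)}) − 1)). In particular, γ does not tend to −∞ at any finite point. -/

import Mathlib

open Set MeasureTheory intervalIntegral

lemma psi_hasDerivAt (m a : ℝ) (hm : 0 < m) (ha : 0 < a) {r : ℝ} (hr : 0 < r) :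
    HasDerivAt (fun x => (1/(2*x)) * (1 - a * (2/(1 + (2*x/m)^a) - 1)))
      ((a^2-1)/(4*r^2) - ((1/(2*r)) * (1 - a * (2/(1 + (2*r/m)^a) - 1)))^2) r := by
  have hx : (0:ℝ) < 2*r/m := by positivity
  have hupos : (0:ℝ) < (2*r/m)^a := Real.rpow_pos_of_pos hx a
  have h1u : (0:ℝ) < 1 + (2*r/m)^a := by linarith
  have hin : HasDerivAt (fun x : ℝ => 2*x/m) (2/m) r := by
    simpa using ((hasDerivAt_id r).const_mul 2).div_const m
  have hu' : HasDerivAt (fun x : ℝ => (2*x/m)^a) (a * (2*r/m)^a / r) r := by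
    have h := (Real.hasDerivAt_rpow_const (x := 2*r/m) (p := a) (Or.inl hx.ne')).comp r hin
    refine h.congr_deriv ?_
    symm
    rw [Real.rpow_sub hx, Real.rpow_one]
    field_simp
  have hinv : HasDerivAt (fun x : ℝ => (1 + (2*x/m)^a)⁻¹)
      (-(a * (2*r/m)^a / r) / (1 + (2*r/m)^a)^2) r := (hu'.const_add 1).inv h1u.ne'
  have h2 : HasDerivAt (fun x : ℝ => 2/(1 + (2*x/m)^a))
      (2 * (-(a * (2*r/m)^a / r) / (1 + (2*r/m)^a)^2)) r := by
    simpa [div_eq_mul_inv] using hinv.const_mul 2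
  have h3 := ((h2.sub_const 1).const_mul a).const_sub 1
  have hfr : HasDerivAt (fun x : ℝ => 1/(2*x)) (-2 / (2*r)^2) r := by
    have := ((hasDerivAt_id r).const_mul 2).inv (by positivity : (2*r:ℝ) ≠ 0)
    simpa [one_div, Pi.inv_def, mul_comm] using this
  have H := hfr.mul h3
  refine H.congr_deriv ?_
  symm
  field_simp
  ring

/-- Comparison principle: for `m > 0`, `k ≠ 0`, `λ ≤ 0`, any solution `γ` on `[m/2, b)` of
`γ' + γ² = −1/(4r²) + k²/r² − (m/r³)(1 + m/(2r))⁻² − λ(1 + m/(2r))⁴` with `γ(m/2) = 1/m`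
satisfies `γ ≥ ψ` where `ψ` is the explicit comparison solution. -/
theorem riccati_comparison_no_blowup (m : ℝ) (hm : 0 < m) (k : ℤ) (hk : k ≠ 0)
    (Λ : ℝ) (hΛ : Λ ≤ 0) (b : ℝ) (γ : ℝ → ℝ)
    (hγ : ∀ r ∈ Set.Ico (m / 2) b,
      HasDerivAt γ
        (-1 / (4 * r ^ 2) + (k : ℝ) ^ 2 / r ^ 2
          - (m / r ^ 3) * (1 + m / (2 * r))⁻¹ ^ 2
          - Λ * (1 + m / (2 * r)) ^ 4 - γ r ^ 2) r)
    (hinit : γ (m / 2) = 1 / m) :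
    ∀ r ∈ Set.Ico (m / 2) b,
      (1 / (2 * r)) * (1 - Real.sqrt (4 * (k : ℝ) ^ 2 - 2) *
        (2 / (1 + (2 * r / m) ^ Real.sqrt (4 * (k : ℝ) ^ 2 - 2)) - 1)) ≤ γ r := by
  have hk2 : (1:ℝ) ≤ (k:ℝ)^2 := by
    have h1 : (1:ℤ) ≤ k^2 := by rcases hk.lt_or_gt with h | h <;> nlinarith
    exact_mod_cast h1
  set a : ℝ := Real.sqrt (4 * (k:ℝ)^2 - 2) with ha
  have ha2 : a^2 = 4*(k:ℝ)^2 - 2 := Real.sq_sqrt (by nlinarith)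
  have hapos : 0 < a := Real.sqrt_pos.2 (by nlinarith)
  set ψ : ℝ → ℝ := fun r => (1/(2*r)) * (1 - a * (2/(1 + (2*r/m)^a) - 1)) with hψdef
  have hm2 : (0:ℝ) < m/2 := by linarith
  have hψinit : ψ (m/2) = 1/m := by
    have h1 : 2*(m/2)/m = 1 := by field_simp
    simp only [hψdef, h1, Real.one_rpow]
    norm_num
  have hψd : ∀ r : ℝ, 0 < r → HasDerivAt ψ ((a^2-1)/(4*r^2) - ψ r^2) r :=
    fun r hr => psi_hasDerivAt m a hm hapos hr
  intro c hc
  show ψ c ≤ γ c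
  have hsub : Icc (m/2) c ⊆ Ico (m/2) b := fun x hx => ⟨hx.1, lt_of_le_of_lt hx.2 hc.2⟩
  have hrpos : ∀ r ∈ Icc (m/2) c, (0:ℝ) < r := fun r hr => lt_of_lt_of_le hm2 hr.1
  set h : ℝ → ℝ := fun r => γ r + ψ r with hh
  have hconth : ∀ r ∈ Ico (m/2) b, ContinuousAt h r := fun r hr =>
    ((hγ r hr).continuousAt).add ((hψd r (lt_of_lt_of_le hm2 hr.1)).continuousAt)
  set F : ℝ → ℝ := fun r => ∫ t in (m/2)..r, h t with hF
  have hintc : IntervalIntegrable h volume (m/2) c := by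
    apply ContinuousOn.intervalIntegrable
    intro x hx
    rw [Set.uIcc_of_le hc.1] at hx
    exact (hconth x (hsub hx)).continuousWithinAt
  have hFcont : ContinuousOn F (Icc (m/2) c) := by
    have := continuousOn_primitive_interval' hintc left_mem_uIcc
    rwa [Set.uIcc_of_le hc.1] at this
  have hFd : ∀ r ∈ Ioo (m/2) c, HasDerivAt F (h r) r := by
    intro r hr
    have hr' : r ∈ Ico (m/2) b := ⟨hr.1.le, hr.2.trans hc.2⟩
    have hint : IntervalIntegrable h volume (m/2) r := by
      apply ContinuousOn.intervalIntegrable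
      intro x hx
      rw [Set.uIcc_of_le hr.1.le] at hx
      exact (hconth x (hsub ⟨hx.1, hx.2.trans hr.2.le⟩)).continuousWithinAt
    have hopen : IsOpen (Ioo (m/2) b) := isOpen_Ioo
    have hmeas : StronglyMeasurableAtFilter h (nhds r) volume := by
      refine ContinuousAt.stronglyMeasurableAtFilter hopen ?_ r ⟨hr.1, hr.2.trans hc.2⟩
      intro x hx
      exact hconth x ⟨hx.1.le, hx.2⟩
    exact intervalIntegral.integral_hasDerivAt_right hint hmeas (hconth r hr')
  set G : ℝ → ℝ := fun r => (γ r - ψ r) * Real.exp (F r) with hG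
  have hGd : ∀ r ∈ Ioo (m/2) c, HasDerivAt G
      (((-1 / (4 * r ^ 2) + (k : ℝ) ^ 2 / r ^ 2 - (m / r ^ 3) * (1 + m / (2 * r))⁻¹ ^ 2
          - Λ * (1 + m / (2 * r)) ^ 4) - (a^2-1)/(4*r^2)) * Real.exp (F r)) r := by
    intro r hr
    have hr' : r ∈ Ico (m/2) b := ⟨hr.1.le, hr.2.trans hc.2⟩
    have h1 := (hγ r hr').sub (hψd r (lt_of_lt_of_le hm2 hr.1.le))
    have h2 := (hFd r hr).exp
    have H := h1.mul h2
    have : G = fun r => (γ r - ψ r) * Real.exp (F r) := hG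
    rw [this]
    refine H.congr_deriv ?_
    symm
    simp only [hh, Pi.sub_apply]
    ring
  have hΔ : ∀ r ∈ Ioo (m/2) c, 0 ≤ (-1 / (4 * r ^ 2) + (k : ℝ) ^ 2 / r ^ 2
      - (m / r ^ 3) * (1 + m / (2 * r))⁻¹ ^ 2
      - Λ * (1 + m / (2 * r)) ^ 4) - (a^2-1)/(4*r^2) := by
    intro r hr
    have hr0 : (0:ℝ) < r := hm2.trans hr.1
    have h1u : (0:ℝ) < 1 + m/(2*r) := by positivity
    have hB : (m / r ^ 3) * (1 + m / (2 * r))⁻¹ ^ 2 ≤ 1/(2*r^2) := by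
      have h2 : (m / r ^ 3) * (1 + m / (2 * r))⁻¹ ^ 2 = m / (r^3 * (1 + m/(2*r))^2) := by
        rw [inv_pow, ← div_eq_mul_inv, div_div]
      rw [h2, div_le_div_iff₀ (by positivity) (by positivity)]
      have h5 : r^3*(1 + m/(2*r))^2 = r*(2*r+m)^2/4 := by field_simp; ring
      rw [h5]
      nlinarith [mul_nonneg hr0.le (sq_nonneg (2*r - m))]
    have hL : Λ * (1 + m / (2 * r)) ^ 4 ≤ 0 :=
      mul_nonpos_of_nonpos_of_nonneg hΛ (by positivity)
    have heq : (-1 / (4 * r ^ 2) + (k : ℝ) ^ 2 / r ^ 2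
        - (m / r ^ 3) * (1 + m / (2 * r))⁻¹ ^ 2
        - Λ * (1 + m / (2 * r)) ^ 4) - (a^2-1)/(4*r^2)
        = (1/(2*r^2) - (m / r ^ 3) * (1 + m / (2 * r))⁻¹ ^ 2)
          + (- (Λ * (1 + m / (2 * r)) ^ 4)) := by
      rw [ha2]
      field_simp
      ring
    rw [heq]
    have : 0 ≤ 1/(2*r^2) - (m / r ^ 3) * (1 + m / (2 * r))⁻¹ ^ 2 := by linarith
    linarith
  have hGcont : ContinuousOn G (Icc (m/2) c) := by
    apply ContinuousOn.mul
    · intro x hx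
      exact (((hγ x (hsub hx)).continuousAt.sub
        ((hψd x (hrpos x hx)).continuousAt)).continuousWithinAt)
    · exact Real.continuous_exp.comp_continuousOn hFcont
  have hmono : MonotoneOn G (Icc (m/2) c) := by
    apply monotoneOn_of_deriv_nonneg (convex_Icc _ _) hGcont
    · rw [interior_Icc]
      intro x hx
      exact (hGd x hx).differentiableAt.differentiableWithinAt
    · rw [interior_Icc]
      intro x hx
      rw [(hGd x hx).deriv]
      exact mul_nonneg (hΔ x hx) (Real.exp_pos _).le
  have h0 : G (m/2) = 0 := by
    have hF0 : F (m/2) = 0 := intervalIntegral.integral_same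
    simp only [hG, hF0, hinit, hψinit, sub_self, zero_mul]
  have hGc : 0 ≤ G c := by
    have := hmono (left_mem_Icc.2 hc.1) (right_mem_Icc.2 hc.1) hc.1
    rwa [h0] at this
  have hGc' : 0 ≤ (γ c - ψ c) * Real.exp (F c) := hGc
  nlinarith [Real.exp_pos (F c)]
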